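/- arXiv:1407.1598 — 3 statements merged into one kernel-verified Lean document; each statement's English description precedes it below -/
import Mathlib

section
/- Let J : ℝ^N → ℝ be a finite-valued convex function, Φ : ℝ^N → ℝ^P linear, and x₀ ∈ ℝ^N with Im(Φ^*) ∩ ∂J(x₀) ≠ ∅ and ker(Φ) ∩ T_{x₀} = {0}. Let p₀ be the unique minimal-Euclidean-norm element of {p ∈ ℝ^P : Φ^*p ∈ ∂J(x₀)} and set η₀ = Φ^*p₀ (the minimal-norm certificate); let p_F be the unique minimal-Euclidean-norm element of {p ∈ ℝ^P : Φ^*p ∈ aff(∂J(x₀))} and set η_F = Φ^*p_F (the linearized pre-certificate). Then: (i) if η_F ∈ ri(∂J(x₀)) then η_F = η₀; and (ii) if η₀ ∈ ri(∂J(x₀)) then η_F = η₀. -/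
open Matrix

/-- Euclidean dot product on `ℝ^n`. -/
noncomputable def dotp {n : ℕ} (u v : Fin n → ℝ) : ℝ := ∑ i, u i * v i

/-- Euclidean (ℓ²) norm on `ℝ^n`. -/
noncomputable def nrm2 {n : ℕ} (u : Fin n → ℝ) : ℝ := Real.sqrt (∑ i, (u i) ^ 2)

/-- ℓ¹ norm on `ℝ^n`. -/
noncomputable def l1norm {n : ℕ} (u : Fin n → ℝ) : ℝ := ∑ i, |u i|

/-- ℓ^∞ norm of a finitely indexed real vector. -/
noncomputable def linf {ι : Type*} [Fintype ι] (u : ι → ℝ) : ℝ := ⨆ i, |u i|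

/-- The sign function: 1 for positive, -1 for negative, 0 at 0. -/
noncomputable def sgn (t : ℝ) : ℝ := if 0 < t then 1 else if t < 0 then -1 else 0

/-- Subdifferential of a finite-valued function `J : ℝ^n → ℝ` at `x`:
`∂J(x) = {η : J(x+δ) ≥ J(x) + ⟨η,δ⟩ for all δ}`. -/
def subdiff {n : ℕ} (J : (Fin n → ℝ) → ℝ) (x : Fin n → ℝ) : Set (Fin n → ℝ) :=
  {η | ∀ δ, J x + dotp η δ ≤ J (x + δ)}

/-- The model tangent subspace `T_x = Lin(∂J(x))^⊥`, where `Lin(E)` is the linear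
space parallel to the affine hull of `E`. -/
def modelT {n : ℕ} (J : (Fin n → ℝ) → ℝ) (x : Fin n → ℝ) : Set (Fin n → ℝ) :=
  {u | ∀ v ∈ (affineSpan ℝ (subdiff J x)).direction, dotp u v = 0}

lemma nrm2_eq_norm {n : ℕ} (u : Fin n → ℝ) :
    nrm2 u = ‖(WithLp.equiv 2 (Fin n → ℝ)).symm u‖ := by
  rw [EuclideanSpace.norm_eq]
  unfold nrm2
  congr 1
  refine Finset.sum_congr rfl fun i _ => ?_
  show u i ^ 2 = ‖u i‖ ^ 2
  rw [Real.norm_eq_abs, sq_abs]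

lemma nrm2_convex {n : ℕ} (u v : Fin n → ℝ) (t : ℝ) (ht0 : 0 ≤ t) (ht1 : t ≤ 1) :
    nrm2 ((1 - t) • u + t • v) ≤ (1 - t) * nrm2 u + t * nrm2 v := by
  rw [nrm2_eq_norm, nrm2_eq_norm, nrm2_eq_norm]
  have : (WithLp.equiv 2 (Fin n → ℝ)).symm ((1 - t) • u + t • v)
      = (1 - t) • (WithLp.equiv 2 (Fin n → ℝ)).symm u
        + t • (WithLp.equiv 2 (Fin n → ℝ)).symm v := rfl
  rw [this]
  calc ‖_ + _‖ ≤ ‖(1-t) • (WithLp.equiv 2 (Fin n → ℝ)).symm u‖ + ‖t • (WithLp.equiv 2 (Fin n → ℝ)).symm v‖ := norm_add_le _ _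
  _ = (1-t) * ‖(WithLp.equiv 2 (Fin n → ℝ)).symm u‖ + t * ‖(WithLp.equiv 2 (Fin n → ℝ)).symm v‖ := by
      rw [norm_smul, norm_smul, Real.norm_of_nonneg (by linarith), Real.norm_of_nonneg ht0]

theorem stmt7' {N P : ℕ} (J : (Fin N → ℝ) → ℝ)
    (Φ : Matrix (Fin P) (Fin N) ℝ) (x₀ : Fin N → ℝ)
    (p₀ pF : Fin P → ℝ)
    (hp₀mem : Φᵀ.mulVec p₀ ∈ subdiff J x₀)
    (hp₀min : ∀ q : Fin P → ℝ, Φᵀ.mulVec q ∈ subdiff J x₀ → q ≠ p₀ → nrm2 p₀ < nrm2 q)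
    (hpFmem : Φᵀ.mulVec pF ∈ affineSpan ℝ (subdiff J x₀))
    (hpFmin : ∀ q : Fin P → ℝ, Φᵀ.mulVec q ∈ affineSpan ℝ (subdiff J x₀) → q ≠ pF →
      nrm2 pF < nrm2 q) :
    (Φᵀ.mulVec pF ∈ intrinsicInterior ℝ (subdiff J x₀) → Φᵀ.mulVec pF = Φᵀ.mulVec p₀) ∧
    (Φᵀ.mulVec p₀ ∈ intrinsicInterior ℝ (subdiff J x₀) → Φᵀ.mulVec pF = Φᵀ.mulVec p₀) := by
  have hp₀aff : Φᵀ.mulVec p₀ ∈ affineSpan ℝ (subdiff J x₀) := mem_affineSpan ℝ hp₀mem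
  constructor
  · intro h
    have hC : Φᵀ.mulVec pF ∈ subdiff J x₀ := intrinsicInterior_subset h
    by_contra hne
    have hpne : pF ≠ p₀ := fun e => hne (by rw [e])
    have h1 := hp₀min pF hC hpne
    have h2 := hpFmin p₀ hp₀aff hpne.symm
    linarith
  · intro h
    suffices hpp : pF = p₀ by rw [hpp]
    by_contra hpne
    have hlt : nrm2 pF < nrm2 p₀ := hpFmin p₀ hp₀aff (Ne.symm hpne)
    -- extract interior point
    rw [mem_intrinsicInterior] at h
    obtain ⟨y, hy, hy0⟩ := h
    -- path g : ℝ → subtype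
    set η₀ := Φᵀ.mulVec p₀ with hη₀
    set ηF := Φᵀ.mulVec pF with hηF
    have hmem : ∀ t : ℝ, (1 - t) • η₀ + t • ηF ∈ affineSpan ℝ (subdiff J x₀) := by
      intro t
      have := AffineMap.lineMap_mem (k := ℝ) t hp₀aff hpFmem
      rwa [AffineMap.lineMap_apply_module] at this
    set g : ℝ → (affineSpan ℝ (subdiff J x₀) : Set (Fin N → ℝ)) :=
      fun t => ⟨(1 - t) • η₀ + t • ηF, hmem t⟩ with hg
    have hgc : Continuous g := by
      apply Continuous.subtype_mk
      fun_prop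
    have hopen : IsOpen (g ⁻¹' interior ((↑) ⁻¹' subdiff J x₀)) :=
      isOpen_interior.preimage hgc
    have h0 : (0 : ℝ) ∈ g ⁻¹' interior ((↑) ⁻¹' subdiff J x₀) := by
      have : g 0 = y := by
        apply Subtype.ext
        simp [hg, hy0]
      rw [Set.mem_preimage, this]
      convert hy <;> exact Iff.rfl
    obtain ⟨ε, hε, hball⟩ := Metric.isOpen_iff.mp hopen 0 h0
    set t : ℝ := min (ε / 2) (1 / 2) with ht
    have ht0 : 0 < t := lt_min (by linarith) (by norm_num)
    have ht1 : t ≤ 1 / 2 := min_le_right _ _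
    have htball : t ∈ Metric.ball (0 : ℝ) ε := by
      rw [Metric.mem_ball, Real.dist_eq, sub_zero, abs_of_pos ht0]
      calc t ≤ ε / 2 := min_le_left _ _
      _ < ε := by linarith
    have hin : ((1 - t) • η₀ + t • ηF) ∈ subdiff J x₀ := by
      have := interior_subset (hball htball)
      exact this
    set q : Fin P → ℝ := (1 - t) • p₀ + t • pF with hq
    have hΦq : Φᵀ.mulVec q = (1 - t) • η₀ + t • ηF := by
      rw [hq, Matrix.mulVec_add, Matrix.mulVec_smul, Matrix.mulVec_smul]
    have hqmem : Φᵀ.mulVec q ∈ subdiff J x₀ := by rw [hΦq]; exact hin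
    have hqne : q ≠ p₀ := by
      intro e
      apply hpne
      have : t • pF = t • p₀ := by
        have := congrArg (fun z => z - (1 - t) • p₀) e
        simp only [hq] at this
        rw [add_sub_cancel_left] at this
        rw [this]
        module
      have := smul_right_injective (Fin P → ℝ) (ne_of_gt ht0) this
      exact this
    have h1 := hp₀min q hqmem hqne
    have h2 := nrm2_convex p₀ pF t (le_of_lt ht0) (by linarith)
    nlinarith [h1, h2, hlt, ht0]

/-- relationship between the minimal-norm certificate `η₀ = Φ^*p₀`
and the linearized pre-certificate `η_F = Φ^*p_F`: if either of them lies in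
`ri(∂J(x₀))`, then `η_F = η₀`. -/
theorem stmt7 {N P : ℕ} (J : (Fin N → ℝ) → ℝ) (hJ : ConvexOn ℝ Set.univ J)
    (Φ : Matrix (Fin P) (Fin N) ℝ) (x₀ : Fin N → ℝ)
    (hD : ({η : Fin N → ℝ | ∃ p : Fin P → ℝ, η = Φᵀ.mulVec p} ∩ subdiff J x₀).Nonempty)
    (hker : {x : Fin N → ℝ | Φ.mulVec x = 0} ∩ modelT J x₀ = {0})
    (p₀ pF : Fin P → ℝ)
    (hp₀mem : Φᵀ.mulVec p₀ ∈ subdiff J x₀)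
    (hp₀min : ∀ q : Fin P → ℝ, Φᵀ.mulVec q ∈ subdiff J x₀ → q ≠ p₀ → nrm2 p₀ < nrm2 q)
    (hpFmem : Φᵀ.mulVec pF ∈ affineSpan ℝ (subdiff J x₀))
    (hpFmin : ∀ q : Fin P → ℝ, Φᵀ.mulVec q ∈ affineSpan ℝ (subdiff J x₀) → q ≠ pF →
      nrm2 pF < nrm2 q) :
    (Φᵀ.mulVec pF ∈ intrinsicInterior ℝ (subdiff J x₀) → Φᵀ.mulVec pF = Φᵀ.mulVec p₀) ∧
    (Φᵀ.mulVec p₀ ∈ intrinsicInterior ℝ (subdiff J x₀) → Φᵀ.mulVec pF = Φᵀ.mulVec p₀) := by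
  exact stmt7' J Φ x₀ p₀ pF hp₀mem hp₀min hpFmem hpFmin
end

section
/- Let Φ : ℝ^N → ℝ^P be linear with columns φ₁,…,φ_N, let x₀ ∈ ℝ^N with I = supp(x₀), and assume (φ_i)_{i∈I} is linearly independent. Let η_F = Φ^* Φ_I (Φ_I^⊤Φ_I)^{-1} sign(x₀)_I be the linearized pre-certificate. Then η_F belongs to the relative interior of ∂‖·‖₁(x₀) if and only if the irrepresentable condition holds: ‖Φ_{I^c}^⊤ Φ_I (Φ_I^⊤Φ_I)^{-1} sign(x₀)_I‖_∞ < 1, where I^c is the complement of I and Φ_{I^c} the submatrix of columns indexed by I^c. -/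
open Matrix

/-- Support of `x` as a finite set of indices. -/
noncomputable def suppF {n : ℕ} (x : Fin n → ℝ) : Finset (Fin n) :=
  Finset.univ.filter fun i => x i ≠ 0

/-- The submatrix `Φ_I` of columns of `Φ` indexed by `I`. -/
noncomputable def colsub {N P : ℕ} (Φ : Matrix (Fin P) (Fin N) ℝ) (I : Finset (Fin N)) :
    Matrix (Fin P) ↥I ℝ := Φ.submatrix id (↑)

/-- The vector `p_F = Φ_I (Φ_I^⊤ Φ_I)⁻¹ s` for a sign vector `s` on `I`. -/
noncomputable def pFvec {N P : ℕ} (Φ : Matrix (Fin P) (Fin N) ℝ) (I : Finset (Fin N))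
    (s : ↥I → ℝ) : Fin P → ℝ :=
  (colsub Φ I).mulVec ((((colsub Φ I)ᵀ * (colsub Φ I))⁻¹).mulVec s)

/-- The irrepresentable-condition quantity `‖Φ_{I^c}^⊤ Φ_I (Φ_I^⊤Φ_I)⁻¹ s‖_∞`. -/
noncomputable def ICval {N P : ℕ} (Φ : Matrix (Fin P) (Fin N) ℝ) (I : Finset (Fin N))
    (s : ↥I → ℝ) : ℝ :=
  linf ((Φ.submatrix id ((↑) : {j // j ∉ I} → Fin N))ᵀ.mulVec (pFvec Φ I s))


lemma abs_sgn_le (t : ℝ) : |sgn t| ≤ 1 := by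
  unfold sgn; split
  · simp
  · split <;> simp

lemma abs_sgn_of_ne {t : ℝ} (h : t ≠ 0) : |sgn t| = 1 := by
  rcases h.lt_or_gt with h' | h' <;> simp [sgn, h', h'.not_gt, asymm h']

lemma linf_le_one_iff {ι : Type*} [Fintype ι] (u : ι → ℝ) : linf u ≤ 1 ↔ ∀ i, |u i| ≤ 1 := by
  unfold linf
  constructor
  · intro h i
    exact le_trans (le_ciSup (f := fun i => |u i|) (Set.Finite.bddAbove (Set.finite_range _)) i) h
  · intro h
    rcases isEmpty_or_nonempty ι with h' | h'
    · simp [Real.iSup_of_isEmpty]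
    · exact ciSup_le h

lemma linf_lt_one_iff {ι : Type*} [Fintype ι] (u : ι → ℝ) : linf u < 1 ↔ ∀ i, |u i| < 1 := by
  unfold linf
  constructor
  · intro h i
    exact lt_of_le_of_lt (le_ciSup (f := fun i => |u i|) (Set.Finite.bddAbove (Set.finite_range _)) i) h
  · intro h
    rcases isEmpty_or_nonempty ι with h' | h'
    · simp [Real.iSup_of_isEmpty]
    · obtain ⟨i0, hi0⟩ := Finite.exists_max fun i => |u i|
      exact lt_of_le_of_lt (ciSup_le hi0) (h i0)

lemma mem_suppF_iff {n : ℕ} (x : Fin n → ℝ) (i : Fin n) : i ∈ suppF x ↔ x i ≠ 0 := by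
  simp [suppF]

/-- The subdifferential of the ℓ¹ norm at `x`:
`{η : ‖η‖_∞ ≤ 1 and η_i = sign(x_i) on supp(x)}`. -/
noncomputable def l1subdiff {n : ℕ} (x : Fin n → ℝ) : Set (Fin n → ℝ) :=
  {η | linf η ≤ 1 ∧ ∀ i, x i ≠ 0 → η i = sgn (x i)}

/-- the linearized pre-certificate
`η_F = Φ^* Φ_I (Φ_I^⊤Φ_I)⁻¹ sign(x₀)_I` lies in the relative interior of
`∂‖·‖₁(x₀)` iff the irrepresentable condition
`‖Φ_{I^c}^⊤ Φ_I (Φ_I^⊤Φ_I)⁻¹ sign(x₀)_I‖_∞ < 1` holds. -/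
theorem stmt10 {N P : ℕ} (Φ : Matrix (Fin P) (Fin N) ℝ) (x₀ : Fin N → ℝ)
    (hli : LinearIndependent ℝ (fun i : ↥(suppF x₀) => Φᵀ (i : Fin N))) :
    Φᵀ.mulVec (pFvec Φ (suppF x₀) (fun i => sgn (x₀ i))) ∈
        intrinsicInterior ℝ (l1subdiff x₀) ↔
      ICval Φ (suppF x₀) (fun i => sgn (x₀ i)) < 1 := by
  classical
  set C := l1subdiff x₀ with hC
  set η := Φᵀ.mulVec (pFvec Φ (suppF x₀) (fun i => sgn (x₀ i))) with hη
  set B := colsub Φ (suppF x₀) with hB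
  -- injectivity of B.mulVec from linear independence of the columns
  have hinj : ∀ c : ↥(suppF x₀) → ℝ, B.mulVec c = 0 → c = 0 := by
    intro c hc
    have h2 := Fintype.linearIndependent_iff.mp hli c ?_
    · funext i; exact h2 i
    · funext p
      have h3 := congrFun hc p
      simp only [Matrix.mulVec, dotProduct, hB, colsub, Matrix.submatrix_apply,
        id_eq, Pi.zero_apply] at h3
      simpa [Finset.sum_apply, Matrix.transpose_apply, mul_comm] using h3
  -- positive definiteness of the Gram matrix
  have hG : (Bᵀ * B).PosDef := by
    rw [Matrix.posDef_iff_dotProduct_mulVec]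
    constructor
    · have := Matrix.isHermitian_conjTranspose_mul_self B
      rwa [Matrix.conjTranspose_eq_transpose_of_trivial] at this
    · intro x hx
      have hBx : B.mulVec x ≠ 0 := fun h => hx (hinj x h)
      have h1 : star x ⬝ᵥ ((Bᵀ * B) *ᵥ x) = (B *ᵥ x) ⬝ᵥ (B *ᵥ x) := by
        rw [← Matrix.mulVec_mulVec, dotProduct_mulVec, star_trivial,
          Matrix.vecMul_transpose]
      rw [h1]
      have hnn : 0 ≤ (B *ᵥ x) ⬝ᵥ (B *ᵥ x) :=
        Finset.sum_nonneg fun i _ => mul_self_nonneg _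
      rcases lt_or_eq_of_le hnn with h | h
      · exact h
      · exact absurd (dotProduct_self_eq_zero.mp h.symm) hBx
  have hGdet : IsUnit (Bᵀ * B).det := (Matrix.isUnit_iff_isUnit_det _).mp hG.isUnit
  have hGinv : (Bᵀ * B) * (Bᵀ * B)⁻¹ = 1 := Matrix.mul_nonsing_inv _ hGdet
  -- η agrees with the sign on the support
  have hsupp : ∀ i : ↥(suppF x₀), η ↑i = sgn (x₀ ↑i) := by
    intro i
    have h1 : η ↑i = (Bᵀ *ᵥ pFvec Φ (suppF x₀) (fun i => sgn (x₀ ↑i))) i := by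
      simp [hη, Matrix.mulVec, dotProduct, hB, colsub]
    rw [h1]
    show (Bᵀ *ᵥ (B *ᵥ ((Bᵀ * B)⁻¹ *ᵥ _))) i = _
    rw [Matrix.mulVec_mulVec, Matrix.mulVec_mulVec, hGinv, Matrix.one_mulVec]
  -- the IC value is the sup of |η| off the support
  have hIC : ICval Φ (suppF x₀) (fun i => sgn (x₀ ↑i))
      = linf (fun j : {j // j ∉ suppF x₀} => η ↑j) := by
    unfold ICval linf
    congr 1
  -- the base point (sign vector)
  set η₀ : Fin N → ℝ := fun i => sgn (x₀ i) with hη₀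
  have hη₀C : η₀ ∈ C := ⟨(linf_le_one_iff _).mpr fun i => abs_sgn_le _, fun i _ => rfl⟩
  -- every point of the affine span agrees with sgn on the support
  have hspan : ∀ z ∈ affineSpan ℝ C, ∀ i, x₀ i ≠ 0 → z i = sgn (x₀ i) := by
    set V : Submodule ℝ (Fin N → ℝ) :=
      { carrier := {v | ∀ i, x₀ i ≠ 0 → v i = 0}
        add_mem' := fun ha hb i hi => by simp [ha i hi, hb i hi]
        zero_mem' := fun i _ => rfl
        smul_mem' := fun c a ha i hi => by simp [ha i hi] } with hV
    have hle : affineSpan ℝ C ≤ AffineSubspace.mk' η₀ V := by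
      apply affineSpan_le.mpr
      intro z hz
      rw [SetLike.mem_coe, AffineSubspace.mem_mk']
      intro i hi
      have := hz.2 i hi
      simp [this, hη₀]
    intro z hz i hi
    have h4 : z ∈ AffineSubspace.mk' η₀ V := hle hz
    rw [AffineSubspace.mem_mk'] at h4
    have h5 := h4 i hi
    have h6 : z i - η₀ i = 0 := h5
    have : η₀ i = sgn (x₀ i) := rfl
    linarith [h6, this ▸ h6]
  -- coordinate vectors off the support lie in the direction of the span
  have hdir : ∀ j, x₀ j = 0 → Pi.single j (1 : ℝ) ∈ (affineSpan ℝ C).direction := by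
    intro j hj
    have h1 : η₀ + Pi.single j 1 ∈ C := by
      constructor
      · rw [linf_le_one_iff]
        intro i
        by_cases hij : i = j
        · subst hij
          simp [hη₀, Pi.single_eq_same, sgn, hj]
        · simp only [Pi.add_apply, Pi.single_eq_of_ne hij, add_zero]
          exact abs_sgn_le _
      · intro i hi
        have hij : i ≠ j := fun h => hi (h ▸ hj)
        simp [hη₀, Pi.single_eq_of_ne hij]
    have h2 := AffineSubspace.vsub_mem_direction (subset_affineSpan ℝ C h1)
      (subset_affineSpan ℝ C hη₀C)
    simpa using h2
  constructor
  · -- forward direction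
    intro hmem
    rw [mem_intrinsicInterior] at hmem
    obtain ⟨y, hy, hyx⟩ := hmem
    rw [hIC, linf_lt_one_iff]
    intro j
    obtain ⟨ε, hε, hball⟩ := Metric.isOpen_iff.mp isOpen_interior y hy
    have hj0 : x₀ ↑j = 0 := by
      have := j.2
      simpa [mem_suppF_iff] using this
    have key : ∀ t : ℝ, |t| < ε → |η ↑j + t| ≤ 1 := by
      intro t ht
      have hmemS : t • (Pi.single (↑j : Fin N) (1 : ℝ) : Fin N → ℝ) +ᵥ (y : Fin N → ℝ) ∈ affineSpan ℝ C :=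
        AffineSubspace.vadd_mem_of_mem_direction
          (Submodule.smul_mem _ t (hdir ↑j hj0)) y.2
      set p : ↥(affineSpan ℝ C) := ⟨_, hmemS⟩ with hp
      have hnorm1 : ‖(Pi.single (↑j : Fin N) (1 : ℝ) : Fin N → ℝ)‖ ≤ 1 := by
        rw [Pi.norm_single]; simp
      have hdist : dist p y < ε := by
        rw [Subtype.dist_eq]
        show dist (t • (Pi.single (↑j : Fin N) (1 : ℝ) : Fin N → ℝ) +ᵥ (y : Fin N → ℝ)) ↑y < ε
        rw [vadd_eq_add, dist_eq_norm, add_sub_cancel_right, norm_smul, Real.norm_eq_abs]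
        calc |t| * ‖(Pi.single (↑j : Fin N) (1 : ℝ) : Fin N → ℝ)‖ ≤ |t| * 1 :=
              mul_le_mul_of_nonneg_left hnorm1 (abs_nonneg t)
          _ = |t| := mul_one _
          _ < ε := ht
      have hpC' : p ∈ (Subtype.val ⁻¹' C : Set ↥(affineSpan ℝ C)) := interior_subset (hball hdist)
      have hpC : (p : Fin N → ℝ) ∈ C := hpC'
      have h6 := (linf_le_one_iff _).mp hpC.1 ↑j
      have h7 : (p : Fin N → ℝ) ↑j = t + (y : Fin N → ℝ) ↑j := by
        simp [hp, Pi.single_eq_same]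
      rw [h7, hyx] at h6
      rwa [add_comm] at h6
    have h1 := key (ε / 2) (by rw [abs_of_pos (by linarith)]; linarith)
    have h2 := key (-(ε / 2)) (by rw [abs_neg, abs_of_pos (by linarith)]; linarith)
    rw [abs_le] at h1 h2
    rw [abs_lt]
    constructor <;> [linarith [h2.2]; linarith [h1.2]]
  · -- backward direction
    intro hic
    rw [hIC, linf_lt_one_iff] at hic
    have hηC : η ∈ C := by
      constructor
      · rw [linf_le_one_iff]
        intro i
        by_cases hi : x₀ i = 0
        · exact (hic ⟨i, by simp [mem_suppF_iff, hi]⟩).le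
        · rw [hsupp ⟨i, (mem_suppF_iff _ _).mpr hi⟩]
          exact (abs_sgn_of_ne hi).le
      · intro i hi
        exact hsupp ⟨i, (mem_suppF_iff _ _).mpr hi⟩
    rw [mem_intrinsicInterior]
    refine ⟨⟨η, subset_affineSpan ℝ C hηC⟩, ?_, rfl⟩
    have hUopen : IsOpen (⋂ j : {j : Fin N // j ∉ suppF x₀},
        {p : ↥(affineSpan ℝ C) | |(p : Fin N → ℝ) ↑j| < 1}) := by
      apply isOpen_iInter_of_finite
      intro j
      have hcont : Continuous fun p : ↥(affineSpan ℝ C) => |(p : Fin N → ℝ) ↑j| :=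
        ((continuous_apply (↑j : Fin N)).comp continuous_subtype_val).abs
      exact isOpen_Iio.preimage hcont
    have hUsub : (⋂ j : {j : Fin N // j ∉ suppF x₀},
        {p : ↥(affineSpan ℝ C) | |(p : Fin N → ℝ) ↑j| < 1}) ⊆ (↑) ⁻¹' C := by
      intro p hp
      refine ⟨?_, fun i hi => hspan ↑p p.2 i hi⟩
      rw [linf_le_one_iff]
      intro i
      by_cases hi : x₀ i = 0
      · exact (Set.mem_iInter.mp hp ⟨i, by simp [mem_suppF_iff, hi]⟩).le
      · rw [hspan ↑p p.2 i hi]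
        exact (abs_sgn_of_ne hi).le
    apply interior_maximal hUsub hUopen
    exact Set.mem_iInter.mpr fun j => hic j
end

section
/- Let Φ : ℝ^N → ℝ^P have unit Euclidean-norm columns φ₁,…,φ_N, let I ⊆ {1,…,N} with k = |I| ≥ 1, and let x₀ ∈ ℝ^N with supp(x₀) = I. Assume (φ_i)_{i∈I} is linearly independent and (k−1)·μ(Φ) < 1, where μ(Φ) = max_{i≠j} |⟨φ_i,φ_j⟩| is the mutual coherence. Define IC(x₀) = ‖Φ_{I^c}^⊤ Φ_I (Φ_I^⊤Φ_I)^{-1} sign(x₀)_I‖_∞, ERC(I) = max_{j∉I} ‖(Φ_I^⊤Φ_I)^{-1} Φ_I^⊤ φ_j‖₁, and wERC(I) = (max_{j∈I^c} Σ_{i∈I} |⟨φ_i,φ_j⟩|) / (1 − max_{j∈I} Σ_{i∈I, i≠j} |⟨φ_i,φ_j⟩|). Then IC(x₀) ≤ ERC(I) ≤ wERC(I) ≤ k·μ(Φ)/(1 − (k−1)·μ(Φ)). -/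
open Matrix

/-- ℓ¹ norm of a finitely indexed real vector. -/
noncomputable def l1g {ι : Type*} [Fintype ι] (v : ι → ℝ) : ℝ := ∑ i, |v i|

/-- Mutual coherence `μ(Φ) = max_{i ≠ j} |⟨φ_i, φ_j⟩|`. -/
noncomputable def mutualCoherence {N P : ℕ} (Φ : Matrix (Fin P) (Fin N) ℝ) : ℝ :=
  ⨆ p : {q : Fin N × Fin N // q.1 ≠ q.2}, |dotp (Φᵀ p.val.1) (Φᵀ p.val.2)|

/-- Exact Recovery Condition `ERC(I) = max_{j ∉ I} ‖(Φ_I^⊤Φ_I)⁻¹ Φ_I^⊤ φ_j‖₁`. -/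
noncomputable def ERCval {N P : ℕ} (Φ : Matrix (Fin P) (Fin N) ℝ) (I : Finset (Fin N)) : ℝ :=
  ⨆ j : {j // j ∉ I},
    l1g ((((colsub Φ I)ᵀ * (colsub Φ I))⁻¹).mulVec ((colsub Φ I)ᵀ.mulVec (Φᵀ (j : Fin N))))

/-- Weak Exact Recovery Condition
`wERC(I) = (max_{j∉I} Σ_{i∈I} |⟨φ_i,φ_j⟩|) / (1 − max_{j∈I} Σ_{i∈I, i≠j} |⟨φ_i,φ_j⟩|)`. -/
noncomputable def wERCval {N P : ℕ} (Φ : Matrix (Fin P) (Fin N) ℝ) (I : Finset (Fin N)) : ℝ :=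
  (⨆ j : {j // j ∉ I}, ∑ i ∈ I, |dotp (Φᵀ i) (Φᵀ (j : Fin N))|) /
    (1 - ⨆ j : ↥I, ∑ i ∈ I.erase (j : Fin N), |dotp (Φᵀ i) (Φᵀ (j : Fin N))|)

section StmtAux

lemma dotp_comm' {n : ℕ} (u v : Fin n → ℝ) : dotp u v = dotp v u :=
  Finset.sum_congr rfl fun i _ => mul_comm _ _

lemma mu_nonneg' {N P : ℕ} (Φ : Matrix (Fin P) (Fin N) ℝ) : 0 ≤ mutualCoherence Φ :=
  Real.iSup_nonneg fun _ => abs_nonneg _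

lemma dotp_le_mu' {N P : ℕ} (Φ : Matrix (Fin P) (Fin N) ℝ) {i j : Fin N} (h : i ≠ j) :
    |dotp (Φᵀ i) (Φᵀ j)| ≤ mutualCoherence Φ :=
  le_ciSup (f := fun p : {q : Fin N × Fin N // q.1 ≠ q.2} => |dotp (Φᵀ p.val.1) (Φᵀ p.val.2)|)
    (Set.Finite.bddAbove (Set.finite_range _)) ⟨(i, j), h⟩

end StmtAux
/-- ordered upper bounds
`IC(x₀) ≤ ERC(I) ≤ wERC(I) ≤ kμ/(1−(k−1)μ)` for unit-norm columns. -/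
theorem stmt11 {N P : ℕ} (Φ : Matrix (Fin P) (Fin N) ℝ) (I : Finset (Fin N))
    (x₀ : Fin N → ℝ) (hsupp : ∀ i, x₀ i ≠ 0 ↔ i ∈ I)
    (hcard : 1 ≤ I.card)
    (hunit : ∀ j, nrm2 (Φᵀ j) = 1)
    (hli : LinearIndependent ℝ (fun i : ↥I => Φᵀ (i : Fin N)))
    (hmu : ((I.card : ℝ) - 1) * mutualCoherence Φ < 1) :
    ICval Φ I (fun i => sgn (x₀ i)) ≤ ERCval Φ I ∧
    ERCval Φ I ≤ wERCval Φ I ∧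
    wERCval Φ I ≤
      (I.card : ℝ) * mutualCoherence Φ / (1 - ((I.card : ℝ) - 1) * mutualCoherence Φ) := by
  classical
  have hμ0 : 0 ≤ mutualCoherence Φ := mu_nonneg' Φ
  set μ := mutualCoherence Φ with hμdef
  have hI0 : I.Nonempty := Finset.card_pos.mp hcard
  have hne : Nonempty ↥I := ⟨⟨hI0.choose, hI0.choose_spec⟩⟩
  set A : Matrix (Fin P) ↥I ℝ := colsub Φ I with hAdef
  set G : Matrix ↥I ↥I ℝ := Aᵀ * A with hGdef
  have hGapp : ∀ i i' : ↥I, G i i' = dotp (Φᵀ (i : Fin N)) (Φᵀ (i' : Fin N)) := by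
    intro i i'
    simp [hGdef, hAdef, Matrix.mul_apply, colsub, dotp]
  have hGdiag : ∀ i : ↥I, G i i = 1 := by
    intro i
    rw [hGapp]
    have h1 := hunit (i : Fin N)
    unfold nrm2 at h1
    have h2 : ∑ p, (Φᵀ (i : Fin N) p) ^ 2 = 1 := Real.sqrt_eq_one.mp h1
    unfold dotp
    simpa [sq] using h2
  have hGT : Gᵀ = G := by
    rw [hGdef, Matrix.transpose_mul, Matrix.transpose_transpose]
  -- injectivity of mulVec from linear independence
  have hinj : ∀ c : ↥I → ℝ, A.mulVec c = 0 → c = 0 := by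
    intro c hc
    funext i
    refine Fintype.linearIndependent_iff.mp hli c ?_ i
    funext p
    have := congrFun hc p
    simp only [Matrix.mulVec, dotProduct, hAdef, colsub, Matrix.submatrix_apply, id_eq,
      Pi.zero_apply] at this
    simpa [Finset.sum_apply, mul_comm] using this
  -- G is positive definite
  have hGpd : G.PosDef := by
    refine Matrix.PosDef.of_dotProduct_mulVec_pos ?_ ?_
    · rw [Matrix.IsHermitian]
      simpa using hGT
    · intro x hx
      have hAx : A.mulVec x ≠ 0 := fun h0 => hx (hinj x h0)
      have : dotProduct (star x) (G.mulVec x) = dotProduct (A.mulVec x) (A.mulVec x) := by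
        rw [hGdef, ← Matrix.mulVec_mulVec, Matrix.dotProduct_mulVec, Matrix.vecMul_transpose]
        simp
      rw [this]
      obtain ⟨p, hp⟩ := Function.ne_iff.mp hAx
      refine Finset.sum_pos' (fun q _ => mul_self_nonneg _) ⟨p, Finset.mem_univ p, ?_⟩
      exact mul_self_pos.mpr hp
  have hGdet : IsUnit G := hGpd.isUnit
  have hGGinv : G * G⁻¹ = 1 := Matrix.mul_nonsing_inv G ((Matrix.isUnit_iff_isUnit_det G).mp hGdet)
  have hGinvsym : ∀ a b : ↥I, G⁻¹ a b = G⁻¹ b a := by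
    intro a b
    have : (G⁻¹)ᵀ = G⁻¹ := by rw [Matrix.transpose_nonsing_inv, hGT]
    have h2 := congrFun (congrFun this a) b
    rw [Matrix.transpose_apply] at h2
    exact h2.symm
  -- the vectors b j and v j
  set b : Fin N → ↥I → ℝ := fun j i => dotp (Φᵀ (i : Fin N)) (Φᵀ j) with hbdef
  set v : Fin N → ↥I → ℝ := fun j => G⁻¹.mulVec (b j) with hvdef
  have hATcol : ∀ j : Fin N, Aᵀ.mulVec (Φᵀ j) = b j := by
    intro j
    funext i
    simp [hAdef, colsub, Matrix.mulVec, dotProduct, dotp, hbdef]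
  have hGv : ∀ j : Fin N, G.mulVec (v j) = b j := by
    intro j
    rw [hvdef]
    rw [Matrix.mulVec_mulVec, hGGinv, Matrix.one_mulVec]
  -- the quantity h (denominator sup) and num (numerator sup)
  set h : ℝ := ⨆ j : ↥I, ∑ i ∈ I.erase (j : Fin N), |dotp (Φᵀ i) (Φᵀ (j : Fin N))| with hhdef
  set num : ℝ := ⨆ j : {j // j ∉ I}, ∑ i ∈ I, |dotp (Φᵀ i) (Φᵀ (j : Fin N))| with hnumdef
  have hh0 : 0 ≤ h :=
    Real.iSup_nonneg fun j => Finset.sum_nonneg fun _ _ => abs_nonneg _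
  have hnum0 : 0 ≤ num :=
    Real.iSup_nonneg fun j => Finset.sum_nonneg fun _ _ => abs_nonneg _
  have hcastk : ((I.card - 1 : ℕ) : ℝ) = (I.card : ℝ) - 1 := by
    push_cast [Nat.cast_sub hcard]
    ring
  have hhle : h ≤ ((I.card : ℝ) - 1) * μ := by
    refine ciSup_le fun j => ?_
    calc ∑ i ∈ I.erase (j : Fin N), |dotp (Φᵀ i) (Φᵀ (j : Fin N))|
        ≤ ∑ _i ∈ I.erase (j : Fin N), μ :=
          Finset.sum_le_sum fun i hi => dotp_le_mu' Φ (Finset.ne_of_mem_erase hi)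
      _ = ((I.card : ℝ) - 1) * μ := by
          rw [Finset.sum_const, Finset.card_erase_of_mem j.2, nsmul_eq_mul, hcastk]
  have hnumle : num ≤ (I.card : ℝ) * μ := by
    refine Real.iSup_le (fun j => ?_) (by positivity)
    calc ∑ i ∈ I, |dotp (Φᵀ i) (Φᵀ (j : Fin N))|
        ≤ ∑ _i ∈ I, μ := by
          refine Finset.sum_le_sum fun i hi => dotp_le_mu' Φ fun hij => j.2 (hij ▸ hi)
      _ = (I.card : ℝ) * μ := by rw [Finset.sum_const, nsmul_eq_mul]
  have hden : 0 < 1 - h := by linarith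
  -- row sums of G bounded by h
  have hrow : ∀ i' : ↥I, ∑ i ∈ Finset.univ.erase i', |G i i'| ≤ h := by
    intro i'
    have e1 : ∑ i : ↥I, |G i i'| = ∑ x ∈ I, |dotp (Φᵀ x) (Φᵀ (↑i' : Fin N))| := by
      rw [← Finset.sum_coe_sort I (fun x => |dotp (Φᵀ x) (Φᵀ (↑i' : Fin N))|)]
      exact Finset.sum_congr rfl fun i _ => by rw [hGapp]
    have e2 : ∑ i ∈ Finset.univ.erase i', |G i i'|
        = ∑ x ∈ I.erase (↑i' : Fin N), |dotp (Φᵀ x) (Φᵀ (↑i' : Fin N))| := by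
      rw [Finset.sum_erase_eq_sub (Finset.mem_univ i'), Finset.sum_erase_eq_sub i'.2, e1, hGapp]
    rw [e2]
    exact le_ciSup (f := fun j : ↥I => ∑ x ∈ I.erase (j : Fin N), |dotp (Φᵀ x) (Φᵀ (j : Fin N))|)
      (Set.Finite.bddAbove (Set.finite_range _)) i'
  -- the key ℓ¹ bound
  have hl1 : ∀ j : Fin N, l1g (v j) * (1 - h) ≤ ∑ i ∈ I, |dotp (Φᵀ i) (Φᵀ j)| := by
    intro j
    have hvi : ∀ i : ↥I, v j i = b j i - ∑ i' ∈ Finset.univ.erase i, G i i' * v j i' := by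
      intro i
      have hs := congrFun (hGv j) i
      simp only [Matrix.mulVec, dotProduct] at hs
      rw [← Finset.add_sum_erase Finset.univ (fun i' => G i i' * v j i') (Finset.mem_univ i),
        hGdiag i, one_mul] at hs
      linarith
    have hB : ∑ i : ↥I, |b j i| = ∑ i ∈ I, |dotp (Φᵀ i) (Φᵀ j)| := by
      rw [← Finset.sum_coe_sort I (fun x => |dotp (Φᵀ x) (Φᵀ j)|)]
    have step : l1g (v j) ≤ (∑ i ∈ I, |dotp (Φᵀ i) (Φᵀ j)|) + h * l1g (v j) := by
      have c1 : l1g (v j) ≤ ∑ i : ↥I,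
          (|b j i| + ∑ i' ∈ Finset.univ.erase i, |G i i'| * |v j i'|) := by
        refine Finset.sum_le_sum fun i _ => ?_
        rw [hvi i]
        refine (abs_sub _ _).trans (add_le_add_right ?_ _)
        exact (Finset.abs_sum_le_sum_abs _ _).trans
          (le_of_eq (Finset.sum_congr rfl fun i' _ => abs_mul _ _))
      have c2 : ∑ i : ↥I, ∑ i' ∈ Finset.univ.erase i, |G i i'| * |v j i'|
          = ∑ i' : ↥I, ∑ i ∈ Finset.univ.erase i', |G i i'| * |v j i'| := by
        simp only [← Finset.filter_ne', Finset.sum_filter]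
        rw [Finset.sum_comm]
        refine Finset.sum_congr rfl fun i' _ => Finset.sum_congr rfl fun i _ => ?_
        by_cases hii : i' = i
        · simp [hii]
        · simp [hii, Ne.symm hii]
      have c3 : ∀ i' : ↥I, ∑ i ∈ Finset.univ.erase i', |G i i'| * |v j i'| ≤ h * |v j i'| := by
        intro i'
        rw [← Finset.sum_mul]
        exact mul_le_mul_of_nonneg_right (hrow i') (abs_nonneg _)
      calc l1g (v j) ≤ ∑ i : ↥I,
            (|b j i| + ∑ i' ∈ Finset.univ.erase i, |G i i'| * |v j i'|) := c1
        _ = (∑ i : ↥I, |b j i|)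
            + ∑ i : ↥I, ∑ i' ∈ Finset.univ.erase i, |G i i'| * |v j i'| :=
            Finset.sum_add_distrib
        _ ≤ (∑ i ∈ I, |dotp (Φᵀ i) (Φᵀ j)|) + ∑ i' : ↥I, h * |v j i'| := by
            rw [hB, c2]
            exact add_le_add_right (Finset.sum_le_sum fun i' _ => c3 i') _
        _ = (∑ i ∈ I, |dotp (Φᵀ i) (Φᵀ j)|) + h * l1g (v j) := by
            rw [← Finset.mul_sum]; rfl
    nlinarith [step]
  -- wERC as num / (1 - h)
  have hwERC : wERCval Φ I = num / (1 - h) := rfl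
  have hbn : ∀ j : {j // j ∉ I}, (∑ i ∈ I, |dotp (Φᵀ i) (Φᵀ (j : Fin N))|) ≤ num := by
    intro j
    rw [hnumdef]
    exact le_ciSup (f := fun j : {j // j ∉ I} => ∑ i ∈ I, |dotp (Φᵀ i) (Φᵀ (j : Fin N))|)
      (Set.Finite.bddAbove (Set.finite_range _)) j
  have hERC : ERCval Φ I = ⨆ j : {j // j ∉ I}, l1g (v (j : Fin N)) := by
    unfold ERCval
    congr 1
  have h2 : ERCval Φ I ≤ wERCval Φ I := by
    rw [hwERC, hERC]
    refine Real.iSup_le (fun j => ?_) (div_nonneg hnum0 hden.le)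
    rw [le_div_iff₀ hden]
    exact (hl1 _).trans (hbn j)
  have h3 : wERCval Φ I ≤ (I.card : ℝ) * μ / (1 - ((I.card : ℝ) - 1) * μ) := by
    rw [hwERC]
    exact div_le_div₀ (by positivity) hnumle (by linarith) (by linarith)
  -- IC ≤ ERC
  have hsgn : ∀ t : ℝ, |sgn t| ≤ 1 := by
    intro t
    unfold sgn
    split_ifs <;> simp
  have key : ∀ j : {j // j ∉ I},
      ((Φ.submatrix id ((↑) : {j // j ∉ I} → Fin N))ᵀ.mulVec
        (pFvec Φ I (fun i : ↥I => sgn (x₀ (i : Fin N))))) j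
      = ∑ i' : ↥I, v (j : Fin N) i' * sgn (x₀ (i' : Fin N)) := by
    intro j
    unfold pFvec
    rw [← hAdef, ← hGdef]
    simp only [Matrix.mulVec, dotProduct, Matrix.transpose_apply, Matrix.submatrix_apply, id_eq]
    calc (∑ p, Φ p ↑j * ∑ i : ↥I, A p i * (∑ i' : ↥I, G⁻¹ i i' * sgn (x₀ (i' : Fin N))))
        = ∑ p, ∑ i : ↥I, Φ p ↑j * (A p i * ∑ i' : ↥I, G⁻¹ i i' * sgn (x₀ (i' : Fin N))) :=
          Finset.sum_congr rfl fun p _ => Finset.mul_sum _ _ _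
      _ = ∑ i : ↥I, ∑ p, Φ p ↑j * (A p i * ∑ i' : ↥I, G⁻¹ i i' * sgn (x₀ (i' : Fin N))) :=
          Finset.sum_comm
      _ = ∑ i : ↥I, (∑ p, Φ p ↑j * A p i) * (∑ i' : ↥I, G⁻¹ i i' * sgn (x₀ (i' : Fin N))) := by
          refine Finset.sum_congr rfl fun i _ => ?_
          rw [Finset.sum_mul]
          exact Finset.sum_congr rfl fun p _ => (mul_assoc _ _ _).symm
      _ = ∑ i : ↥I, b ↑j i * (∑ i' : ↥I, G⁻¹ i i' * sgn (x₀ (i' : Fin N))) := by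
          refine Finset.sum_congr rfl fun i _ => ?_
          congr 1
          simp only [hbdef, hAdef, colsub, dotp, Matrix.transpose_apply, Matrix.submatrix_apply,
            id_eq]
          exact Finset.sum_congr rfl fun p _ => mul_comm _ _
      _ = ∑ i : ↥I, ∑ i' : ↥I, b ↑j i * (G⁻¹ i i' * sgn (x₀ (i' : Fin N))) :=
          Finset.sum_congr rfl fun i _ => Finset.mul_sum _ _ _
      _ = ∑ i' : ↥I, ∑ i : ↥I, b ↑j i * (G⁻¹ i i' * sgn (x₀ (i' : Fin N))) := Finset.sum_comm
      _ = ∑ i' : ↥I, (∑ i : ↥I, G⁻¹ i' i * b ↑j i) * sgn (x₀ (i' : Fin N)) := by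
          refine Finset.sum_congr rfl fun i' _ => ?_
          rw [Finset.sum_mul]
          refine Finset.sum_congr rfl fun i _ => ?_
          rw [hGinvsym i i']
          ring
      _ = ∑ i' : ↥I, v ↑j i' * sgn (x₀ (i' : Fin N)) := by
          refine Finset.sum_congr rfl fun i' _ => ?_
          simp [hvdef, Matrix.mulVec, dotProduct]
  have h1 : ICval Φ I (fun i => sgn (x₀ i)) ≤ ERCval Φ I := by
    rw [hERC]
    unfold ICval linf
    refine Real.iSup_le (fun j => ?_)
      (Real.iSup_nonneg fun j => Finset.sum_nonneg fun _ _ => abs_nonneg _)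
    refine le_trans ?_ (le_ciSup (f := fun j : {j // j ∉ I} => l1g (v (j : Fin N)))
      (Set.Finite.bddAbove (Set.finite_range _)) j)
    rw [key j]
    calc |∑ i' : ↥I, v ↑j i' * sgn (x₀ (i' : Fin N))|
        ≤ ∑ i' : ↥I, |v ↑j i' * sgn (x₀ (i' : Fin N))| := Finset.abs_sum_le_sum_abs _ _
      _ ≤ ∑ i' : ↥I, |v ↑j i'| := Finset.sum_le_sum fun i' _ => by
          rw [abs_mul]
          exact mul_le_of_le_one_right (abs_nonneg _) (hsgn _)
      _ = l1g (v ↑j) := rfl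
  exact ⟨h1, h2, h3⟩
end
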